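/- Let ξ > 1 be an irrational real number with simple continued fraction expansion ξ = [x₀; x₁, x₂, x₃, …], and let (a,b) ∈ 𝒩 with (a,b) ∉ {(1,0), (x₀,1)}. Then (a,b) is an upper or lower best approximation for ξ if and only if gcd(a,b) = 1 and there exist an integer n ≥ 1 and an integer x with 1 ≤ x ≤ xₙ such that a/b = [x₀; x₁, x₂, …, x_{n-1}, x]. -/

import Mathlib

open Real Finset

/-- `𝒩` is encoded by pairs `x : ℕ × ℕ` with `x ≠ (0,0)`.
The upper set `𝒰(ξ) = {(a,b) ∈ 𝒩 : a > bξ}`. -/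
def Uset (ξ : ℝ) : Set (ℕ × ℕ) := {x | x ≠ (0, 0) ∧ (x.2 : ℝ) * ξ < (x.1 : ℝ)}

/-- The lower set `ℒ(ξ) = {(a,b) ∈ 𝒩 : a < bξ}`. -/
def Lset (ξ : ℝ) : Set (ℕ × ℕ) := {x | x ≠ (0, 0) ∧ (x.1 : ℝ) < (x.2 : ℝ) * ξ}

/-- `𝒢 = {(a,b) ∈ 𝒩 : gcd(a,b) = 1}`. -/
def Gset : Set (ℕ × ℕ) := {x | x ≠ (0, 0) ∧ Nat.Coprime x.1 x.2}

/-- `𝒰₁(ξ)`: elements `(a,b)` of `𝒰(ξ)` with `a/b ≤ m/n` (by cross multiplication)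
for every `(m,n) ∈ 𝒰(ξ)` with `m ≤ a`. -/
def U1 (ξ : ℝ) : Set (ℕ × ℕ) :=
  {x | x ∈ Uset ξ ∧ ∀ y ∈ Uset ξ, y.1 ≤ x.1 → x.1 * y.2 ≤ y.1 * x.2}

/-- `𝒰₂(ξ)`: elements `(a,b)` of `𝒰(ξ)` with `a/b ≤ m/n` for every `(m,n) ∈ 𝒰(ξ)`
with `n ≤ b`. -/
def U2 (ξ : ℝ) : Set (ℕ × ℕ) :=
  {x | x ∈ Uset ξ ∧ ∀ y ∈ Uset ξ, y.2 ≤ x.2 → x.1 * y.2 ≤ y.1 * x.2}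

/-- `ℒ₁(ξ)`: elements `(a,b)` of `ℒ(ξ)` with `a/b ≥ m/n` for every `(m,n) ∈ ℒ(ξ)`
with `m ≤ a`. -/
def L1 (ξ : ℝ) : Set (ℕ × ℕ) :=
  {x | x ∈ Lset ξ ∧ ∀ y ∈ Lset ξ, y.1 ≤ x.1 → y.1 * x.2 ≤ x.1 * y.2}

/-- `ℒ₂(ξ)`: elements `(a,b)` of `ℒ(ξ)` with `a/b ≥ m/n` for every `(m,n) ∈ ℒ(ξ)`
with `n ≤ b`. -/
def L2 (ξ : ℝ) : Set (ℕ × ℕ) :=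
  {x | x ∈ Lset ξ ∧ ∀ y ∈ Lset ξ, y.2 ≤ x.2 → y.1 * x.2 ≤ x.1 * y.2}

/-- `(a,b)` is an upper or lower best approximation for `ξ`. -/
def BestApprox (ξ : ℝ) (x : ℕ × ℕ) : Prop :=
  x ∈ Gset ∩ U1 ξ ∨ x ∈ Gset ∩ L2 ξ

/-- A factorization of a positive rational `α ≠ 1`: a tuple of fractions `r n / s n` of
positive integers, none equal to `1`, with `gcd (r m) (s n) = 1` for all `m, n`, whose
product is `α`. -/
def IsFactorization (α : ℚ) {N : ℕ} (r s : Fin N → ℕ) : Prop :=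
  (∀ n, 0 < r n) ∧ (∀ n, 0 < s n) ∧ (∀ n, (r n : ℚ) / (s n : ℚ) ≠ 1) ∧
    (∀ m n, Nat.Coprime (r m) (s n)) ∧ (∏ n, (r n : ℚ) / (s n : ℚ)) = α

/-- The measure function `f_A(t) = (Σₙ m(rₙ/sₙ)^t)^{1/t}` of a factorization, where
`m(rₙ/sₙ) = log max(rₙ, sₙ)`. -/
noncomputable def fmeas {N : ℕ} (r s : Fin N → ℕ) (t : ℝ) : ℝ :=
  (∑ n, (Real.log ((max (r n) (s n) : ℕ) : ℝ)) ^ t) ^ (1 / t)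

/-- The Gauss-map iterates of `ξ`: `cfRem ξ 0 = ξ` and
`cfRem ξ (n+1) = 1 / (cfRem ξ n - ⌊cfRem ξ n⌋)`. -/
noncomputable def cfRem (ξ : ℝ) : ℕ → ℝ
  | 0 => ξ
  | n + 1 => (cfRem ξ n - (⌊cfRem ξ n⌋₊ : ℝ))⁻¹

/-- The partial quotients `xₙ` of the continued fraction expansion
`ξ = [x₀; x₁, x₂, …]` of an irrational `ξ > 1`. -/
noncomputable def cfDigit (ξ : ℝ) (n : ℕ) : ℕ := ⌊cfRem ξ n⌋₊

/-- The value of the finite continued fraction `[c₀; c₁, …, c_k]`. -/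
def cfVal : List ℕ → ℚ
  | [] => 0
  | [c] => (c : ℚ)
  | c :: rest => (c : ℚ) + (cfVal rest)⁻¹

namespace S18


lemma floor_lt' {ζ : ℝ} (h1 : 1 < ζ) (hirr : Irrational ζ) : (⌊ζ⌋₊ : ℝ) < ζ :=
  lt_of_le_of_ne (Nat.floor_le (by linarith)) (Ne.symm (hirr.ne_nat _))

lemma one_le_floor' {ζ : ℝ} (h1 : 1 < ζ) : 1 ≤ ⌊ζ⌋₊ :=
  Nat.le_floor (by exact_mod_cast h1.le)

lemma frac_pos' {ζ : ℝ} (h1 : 1 < ζ) (hirr : Irrational ζ) : 0 < ζ - ⌊ζ⌋₊ :=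
  sub_pos.mpr (floor_lt' h1 hirr)

lemma frac_lt_one' {ζ : ℝ} : ζ - ⌊ζ⌋₊ < 1 := by
  have := Nat.lt_floor_add_one ζ; linarith

lemma zeta'_gt {ζ : ℝ} (h1 : 1 < ζ) (hirr : Irrational ζ) : 1 < (ζ - ⌊ζ⌋₊)⁻¹ :=
  one_lt_inv_iff₀.mpr ⟨frac_pos' h1 hirr, frac_lt_one'⟩

lemma zeta'_irr {ζ : ℝ} (hirr : Irrational ζ) : Irrational (ζ - ⌊ζ⌋₊)⁻¹ :=
  (hirr.sub_natCast _).inv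

lemma cfRem_zero (ζ : ℝ) : cfRem ζ 0 = ζ := rfl

lemma cfRem_succ (ζ : ℝ) (n : ℕ) :
    cfRem ζ (n + 1) = (cfRem ζ n - (⌊cfRem ζ n⌋₊ : ℝ))⁻¹ := rfl

lemma cfRem_shift (ζ : ℝ) : ∀ n, cfRem ζ (n + 1) = cfRem (ζ - ⌊ζ⌋₊)⁻¹ n
  | 0 => rfl
  | n + 1 => by rw [cfRem_succ, cfRem_shift ζ n, ← cfRem_succ]

lemma cfDigit_shift (ζ : ℝ) (n : ℕ) : cfDigit ζ (n + 1) = cfDigit (ζ - ⌊ζ⌋₊)⁻¹ n := by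
  unfold cfDigit; rw [cfRem_shift]

lemma cfDigit_zero (ζ : ℝ) : cfDigit ζ 0 = ⌊ζ⌋₊ := rfl

lemma cfRem_facts {ζ : ℝ} (h1 : 1 < ζ) (hirr : Irrational ζ) :
    ∀ n, 1 < cfRem ζ n ∧ Irrational (cfRem ζ n) := by
  intro n
  induction n with
  | zero => exact ⟨h1, hirr⟩
  | succ n ih =>
    obtain ⟨hg, hi⟩ := ih
    rw [cfRem_succ]
    exact ⟨zeta'_gt hg hi, zeta'_irr hi⟩

lemma cfDigit_pos {ζ : ℝ} (h1 : 1 < ζ) (hirr : Irrational ζ) (n : ℕ) : 1 ≤ cfDigit ζ n :=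
  Nat.le_floor (by exact_mod_cast (cfRem_facts h1 hirr n).1.le)

/-! ### convergent pairs -/

def cfp : List ℕ → ℕ × ℕ
  | [] => (1, 0)
  | c :: r => (c * (cfp r).1 + (cfp r).2, (cfp r).1)

lemma cfp_fst_pos : ∀ L : List ℕ, (∀ c ∈ L, 1 ≤ c) → 1 ≤ (cfp L).1 := by
  intro L
  induction L with
  | nil => intro _; exact le_refl 1
  | cons c r ih =>
    intro h
    have hc : 1 ≤ c := h c List.mem_cons_self
    have hr : 1 ≤ (cfp r).1 := ih (fun d hd => h d (List.mem_cons_of_mem _ hd))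
    show 1 ≤ c * (cfp r).1 + (cfp r).2
    calc 1 ≤ c * (cfp r).1 :=
          Nat.one_le_iff_ne_zero.mpr (Nat.mul_ne_zero (by omega) (by omega))
      _ ≤ _ := Nat.le_add_right _ _

lemma cfp_coprime : ∀ L : List ℕ, Nat.Coprime (cfp L).1 (cfp L).2 := by
  intro L
  induction L with
  | nil => exact Nat.coprime_one_left 0
  | cons c r ih =>
    show Nat.Coprime (c * (cfp r).1 + (cfp r).2) (cfp r).1
    have h2 : Nat.Coprime ((cfp r).2 + c * (cfp r).1) (cfp r).1 :=
      (Nat.coprime_add_mul_right_left _ _ c).mpr ih.symm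
    rwa [Nat.add_comm] at h2

lemma cfVal_cons (c : ℕ) (r : List ℕ) : cfVal (c :: r) = (c : ℚ) + (cfVal r)⁻¹ := by
  cases r with
  | nil => simp [cfVal]
  | cons d t => rfl

lemma cfVal_nonneg : ∀ L : List ℕ, 0 ≤ cfVal L := by
  intro L
  induction L with
  | nil => simp [cfVal]
  | cons c r ih =>
    rw [cfVal_cons]
    have h2 : (0:ℚ) ≤ (cfVal r)⁻¹ := inv_nonneg.mpr ih
    have h3 : (0:ℚ) ≤ (c:ℚ) := Nat.cast_nonneg c
    linarith

lemma cfp_val : ∀ L : List ℕ, (∀ c ∈ L, 1 ≤ c) →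
    cfVal L = ((cfp L).1 : ℚ) / ((cfp L).2 : ℚ) := by
  intro L
  induction L with
  | nil => simp [cfVal, cfp]
  | cons c r ih =>
    intro h
    have hr := ih (fun d hd => h d (List.mem_cons_of_mem _ hd))
    have hp : 1 ≤ (cfp r).1 := cfp_fst_pos r (fun d hd => h d (List.mem_cons_of_mem _ hd))
    have hp0 : ((cfp r).1 : ℚ) ≠ 0 := by
      have : (cfp r).1 ≠ 0 := by omega
      exact_mod_cast this
    rw [cfVal_cons, hr]
    show (c:ℚ) + (((cfp r).1 : ℚ) / ((cfp r).2:ℚ))⁻¹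
        = ((c * (cfp r).1 + (cfp r).2 : ℕ):ℚ) / (((cfp r).1 : ℕ):ℚ)
    rw [inv_div]
    push_cast
    field_simp

lemma frac_eq_pair {a b p q : ℕ} (hb : 1 ≤ b) (hq : 1 ≤ q) (h1 : Nat.Coprime a b)
    (h2 : Nat.Coprime p q) (h : (a:ℚ)/(b:ℚ) = (p:ℚ)/(q:ℚ)) : a = p ∧ b = q := by
  have hb0 : ((b:ℕ):ℚ) ≠ 0 := by
    have : b ≠ 0 := by omega
    exact_mod_cast this
  have hq0 : ((q:ℕ):ℚ) ≠ 0 := by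
    have : q ≠ 0 := by omega
    exact_mod_cast this
  rw [div_eq_div_iff hb0 hq0] at h
  have hnat : a * q = p * b := by exact_mod_cast h
  have hap : a ∣ p := h1.dvd_of_dvd_mul_right ⟨q, hnat.symm⟩
  have hpa : p ∣ a := h2.dvd_of_dvd_mul_right ⟨b, hnat⟩
  have heq : a = p := Nat.dvd_antisymm hap hpa
  subst heq
  rcases Nat.eq_zero_or_pos a with h0 | hpos
  · subst h0
    have hb1 : b = 1 := Nat.coprime_zero_left b |>.mp h1
    have hq1 : q = 1 := Nat.coprime_zero_left q |>.mp h2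
    exact ⟨rfl, by omega⟩
  · refine ⟨rfl, ?_⟩
    have := Nat.eq_of_mul_eq_mul_left hpos hnat
    omega





/-! ### shifting real inequalities -/

lemma shift_ltU {ζ : ℝ} (hδ : 0 < ζ - ⌊ζ⌋₊) (p q : ℕ) :
    ((q:ℝ) * ζ < ((⌊ζ⌋₊ * q + p : ℕ) : ℝ)) ↔ (q:ℝ) < (p:ℝ) * (ζ - ⌊ζ⌋₊)⁻¹ := by
  rw [← div_eq_mul_inv, lt_div_iff₀ hδ]
  push_cast
  constructor <;> intro h <;> nlinarith [h]

lemma shift_ltL {ζ : ℝ} (hδ : 0 < ζ - ⌊ζ⌋₊) (p q : ℕ) :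
    (((⌊ζ⌋₊ * q + p : ℕ):ℝ) < (q:ℝ) * ζ) ↔ (p:ℝ) * (ζ - ⌊ζ⌋₊)⁻¹ < (q:ℝ) := by
  rw [← div_eq_mul_inv, div_lt_iff₀ hδ]
  push_cast
  constructor <;> intro h <;> nlinarith [h]

/-! ### U1 = U2 -/

lemma U1_iff_U2 {ζ : ℝ} (h1 : 1 < ζ) {a b : ℕ} (hb : 1 ≤ b) :
    (a, b) ∈ U1 ζ ↔ (a, b) ∈ U2 ζ := by
  have hζ0 : (0:ℝ) < ζ := by linarith
  constructor
  · rintro ⟨hU, hmin⟩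
    refine ⟨hU, ?_⟩
    rintro ⟨m, n⟩ hy hn
    by_cases hm : m ≤ a
    · exact hmin (m, n) hy hm
    · push_neg at hm
      calc a * n ≤ a * b := Nat.mul_le_mul_left a hn
        _ ≤ m * b := Nat.mul_le_mul_right b hm.le
  · rintro ⟨hU, hmin⟩
    refine ⟨hU, ?_⟩
    rintro ⟨m, n⟩ hy hm
    by_cases hn : n ≤ b
    · exact hmin (m, n) hy hn
    · push_neg at hn
      exfalso
      obtain ⟨hyne, hylt⟩ := hy
      have hm1 : 1 ≤ m := by
        by_contra hcon
        have hm0 : m = 0 := by omega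
        subst hm0
        have h0 : (0:ℝ) ≤ (n:ℝ) * ζ := by positivity
        simp only [Nat.cast_zero] at hylt
        linarith
      have hbn : (b:ℝ) * ζ < m := by
        have hcast : (b:ℝ) + 1 ≤ n := by exact_mod_cast hn
        nlinarith [hylt]
      have hmb : ((m, b) : ℕ × ℕ) ∈ Uset ζ := by
        refine ⟨?_, hbn⟩
        simp only [Prod.mk.injEq, ne_eq, not_and]
        intro h; omega
      have h1' := hmin (m, b) hmb (le_refl b)
      have ham : a ≤ m := Nat.le_of_mul_le_mul_right h1' (by omega)
      have haeq : a = m := le_antisymm ham hm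
      have ha2 : (b:ℝ) * ζ + 1 < a := by
        have hnb : (b:ℝ) + 1 ≤ n := by exact_mod_cast hn
        have hmeq : (a:ℝ) = (m:ℝ) := by rw [haeq]
        nlinarith [hylt]
      have hstepmem : ((a - 1, b) : ℕ × ℕ) ∈ Uset ζ := by
        constructor
        · simp only [Prod.mk.injEq, ne_eq, not_and]
          intro h; omega
        · show (b:ℝ) * ζ < ((a - 1 : ℕ) : ℝ)
          have ha1 : 1 ≤ a := by omega
          rw [Nat.cast_sub ha1]
          push_cast
          linarith
      have hstep := hmin (a - 1, b) hstepmem (le_refl b)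
      have := Nat.le_of_mul_le_mul_right hstep (by omega : 0 < b)
      omega

/-! ### correspondence lemmas -/

lemma UL_corr {ζ : ℝ} (h1 : 1 < ζ) (hirr : Irrational ζ) {a' b' : ℕ}
    (ha' : 1 ≤ a') (hb' : 1 ≤ b') :
    ((⌊ζ⌋₊ * a' + b', a') : ℕ × ℕ) ∈ U2 ζ ↔ ((a', b') : ℕ × ℕ) ∈ L1 (ζ - ⌊ζ⌋₊)⁻¹ := by
  have hδ : 0 < ζ - ⌊ζ⌋₊ := frac_pos' h1 hirr
  constructor
  · rintro ⟨⟨_, hUlt⟩, hmin⟩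
    constructor
    · refine ⟨?_, (shift_ltU hδ b' a').mp hUlt⟩
      simp only [Prod.mk.injEq, ne_eq, not_and]
      intro h; omega
    · rintro ⟨m, n⟩ hy hm
      obtain ⟨hyne, hylt⟩ := hy
      have hzne : ((⌊ζ⌋₊ * m + n, m) : ℕ × ℕ) ≠ (0, 0) := by
        simp only [Prod.mk.injEq, ne_eq, not_and] at hyne ⊢
        intro h; omega
      have hz : ((⌊ζ⌋₊ * m + n, m) : ℕ × ℕ) ∈ Uset ζ :=
        ⟨hzne, (shift_ltU hδ n m).mpr hylt⟩
      have hbnd := hmin _ hz hm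
      show m * b' ≤ a' * n
      zify at hbnd ⊢
      nlinarith [hbnd]
  · rintro ⟨⟨_, hLlt⟩, hmin⟩
    constructor
    · refine ⟨?_, (shift_ltU hδ b' a').mpr hLlt⟩
      simp only [Prod.mk.injEq, ne_eq, not_and]
      intro h; omega
    · rintro ⟨m, n⟩ hy hn
      obtain ⟨hyne, hylt⟩ := hy
      rcases Nat.eq_zero_or_pos n with h0 | hnpos
      · subst h0; simp
      · have hkn : ⌊ζ⌋₊ * n < m := by
          have hcast : ((⌊ζ⌋₊ * n : ℕ):ℝ) < m := by
            push_cast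
            have hfl : (⌊ζ⌋₊:ℝ) < ζ := floor_lt' h1 hirr
            have hn0 : (0:ℝ) < n := by exact_mod_cast hnpos
            nlinarith [hylt]
          exact_mod_cast hcast
        obtain ⟨s, rfl⟩ : ∃ s, m = ⌊ζ⌋₊ * n + s := ⟨m - ⌊ζ⌋₊ * n, by omega⟩
        have hs1 : 1 ≤ s := by omega
        have hy' : ((n, s) : ℕ × ℕ) ∈ Lset (ζ - ⌊ζ⌋₊)⁻¹ := by
          refine ⟨?_, (shift_ltU hδ s n).mp hylt⟩
          simp only [Prod.mk.injEq, ne_eq, not_and]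
          intro h; omega
        have hbnd := hmin (n, s) hy' hn
        show (⌊ζ⌋₊ * a' + b') * n ≤ (⌊ζ⌋₊ * n + s) * a'
        zify at hbnd ⊢
        nlinarith [hbnd]

lemma LU_corr {ζ : ℝ} (h1 : 1 < ζ) (hirr : Irrational ζ) {a' b' : ℕ}
    (ha' : 1 ≤ a') (hb' : 1 ≤ b') :
    ((⌊ζ⌋₊ * a' + b', a') : ℕ × ℕ) ∈ L2 ζ ↔ ((a', b') : ℕ × ℕ) ∈ U1 (ζ - ⌊ζ⌋₊)⁻¹ := by
  have hδ : 0 < ζ - ⌊ζ⌋₊ := frac_pos' h1 hirr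
  constructor
  · rintro ⟨⟨_, hLlt⟩, hmin⟩
    constructor
    · refine ⟨?_, (shift_ltL hδ b' a').mp hLlt⟩
      simp only [Prod.mk.injEq, ne_eq, not_and]
      intro h; omega
    · rintro ⟨m, n⟩ hy hm
      obtain ⟨hyne, hylt⟩ := hy
      have hm1 : 1 ≤ m := by
        by_contra hcon
        have hm0 : m = 0 := by omega
        subst hm0
        have h0 : (0:ℝ) ≤ (n:ℝ) * (ζ - ⌊ζ⌋₊)⁻¹ := by positivity
        simp only [Nat.cast_zero] at hylt
        linarith
      have hz : ((⌊ζ⌋₊ * m + n, m) : ℕ × ℕ) ∈ Lset ζ := by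
        refine ⟨?_, (shift_ltL hδ n m).mpr hylt⟩
        simp only [Prod.mk.injEq, ne_eq, not_and]
        intro h; omega
      have hbnd := hmin _ hz hm
      show a' * n ≤ m * b'
      zify at hbnd ⊢
      nlinarith [hbnd]
  · rintro ⟨⟨_, hUlt⟩, hmin⟩
    constructor
    · refine ⟨?_, (shift_ltL hδ b' a').mpr hUlt⟩
      simp only [Prod.mk.injEq, ne_eq, not_and]
      intro h; omega
    · rintro ⟨m, n⟩ hy hn
      obtain ⟨hyne, hylt⟩ := hy
      have hn1 : 1 ≤ n := by
        by_contra hcon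
        have hn0 : n = 0 := by omega
        subst hn0
        have h0 : (0:ℝ) ≤ (m:ℝ) := by positivity
        simp only [Nat.cast_zero, zero_mul] at hylt
        linarith
      rcases le_or_gt m (⌊ζ⌋₊ * n) with hjunk | hkn
      · show m * a' ≤ (⌊ζ⌋₊ * a' + b') * n
        calc m * a' ≤ (⌊ζ⌋₊ * n) * a' := Nat.mul_le_mul_right a' hjunk
          _ ≤ (⌊ζ⌋₊ * a' + b') * n := by
              zify; nlinarith []
      · obtain ⟨s, rfl⟩ : ∃ s, m = ⌊ζ⌋₊ * n + s := ⟨m - ⌊ζ⌋₊ * n, by omega⟩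
        have hs1 : 1 ≤ s := by omega
        have hy' : ((n, s) : ℕ × ℕ) ∈ Uset (ζ - ⌊ζ⌋₊)⁻¹ := by
          refine ⟨?_, (shift_ltL hδ s n).mp hylt⟩
          simp only [Prod.mk.injEq, ne_eq, not_and]
          intro h; omega
        have hbnd := hmin (n, s) hy' hn
        show (⌊ζ⌋₊ * n + s) * a' ≤ (⌊ζ⌋₊ * a' + b') * n
        zify at hbnd ⊢
        nlinarith [hbnd]

/-! ### L-side helpers -/

lemma L2_sub_L1 {ζ : ℝ} {a b : ℕ} (h : (a,b) ∈ L2 ζ) : (a,b) ∈ L1 ζ := by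
  obtain ⟨hmem, hmin⟩ := h
  refine ⟨hmem, ?_⟩
  rintro ⟨m, n⟩ hy hm
  by_cases hn : n ≤ b
  · exact hmin (m,n) hy hn
  · push_neg at hn
    calc m * b ≤ a * b := Nat.mul_le_mul_right _ hm
      _ ≤ a * n := Nat.mul_le_mul_left _ (by omega)

lemma L1_one {ζ : ℝ} (h1 : 1 < ζ) (hirr : Irrational ζ) {x : ℕ} (hx1 : 1 ≤ x)
    (hxk : x ≤ ⌊ζ⌋₊) : ((x, 1) : ℕ × ℕ) ∈ L1 ζ := by
  constructor
  · refine ⟨by simp, ?_⟩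
    have hfl := floor_lt' h1 hirr
    have hxr : (x:ℝ) ≤ (⌊ζ⌋₊:ℝ) := by exact_mod_cast hxk
    show ((x:ℕ):ℝ) < ((1:ℕ):ℝ) * ζ
    push_cast
    linarith
  · rintro ⟨m, n⟩ hy hm
    obtain ⟨hyne, hylt⟩ := hy
    have hn1 : 1 ≤ n := by
      by_contra hcon
      have hn0 : n = 0 := by omega
      subst hn0
      simp only [Nat.cast_zero, zero_mul] at hylt
      have : (0:ℝ) ≤ (m:ℝ) := by positivity
      linarith
    exact Nat.mul_le_mul hm hn1

lemma L_one_le {ζ : ℝ} {x : ℕ} (hmem : ((x,1):ℕ×ℕ) ∈ Lset ζ) : x ≤ ⌊ζ⌋₊ := by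
  obtain ⟨_, hlt⟩ := hmem
  apply Nat.le_floor
  simp only [Nat.cast_one, one_mul] at hlt
  exact hlt.le

/-! ### Lemma A : L1 → L2 for coprime with denominator ≥ 2 -/

lemma lemA {ζ : ℝ} (h1 : 1 < ζ) {a b : ℕ} (hcop : Nat.Coprime a b) (hb : 2 ≤ b)
    (hL1 : (a, b) ∈ L1 ζ) : (a, b) ∈ L2 ζ := by
  have ha : 1 ≤ a := by
    rcases Nat.eq_zero_or_pos a with h0 | h
    · exfalso
      subst h0
      have := (Nat.coprime_zero_left b).mp hcop
      omega
    · exact h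
  have key : ¬ ((a:ℝ) + 1 < (b:ℝ) * ζ) := by
    intro hlt
    haveI : NeZero b := ⟨by omega⟩
    haveI : Fact (1 < b) := ⟨by omega⟩
    have hunit : (a : ZMod b) * (a : ZMod b)⁻¹ = 1 := ZMod.coe_mul_inv_eq_one a hcop
    set n : ℕ := (-(a : ZMod b)⁻¹).val with hn
    have hncast : ((n:ℕ) : ZMod b) = -(a : ZMod b)⁻¹ := ZMod.natCast_zmod_val _
    have hdvd : b ∣ a * n + 1 := by
      rw [← ZMod.natCast_eq_zero_iff]
      push_cast
      rw [hncast, mul_neg, hunit]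
      ring
    have hnlt : n < b := ZMod.val_lt _
    have hn1 : 1 ≤ n := by
      by_contra hcon
      have hn0 : n = 0 := by omega
      have hz : -(a : ZMod b)⁻¹ = 0 := by rw [← hncast, hn0]; simp
      have hu0 : (a : ZMod b)⁻¹ = 0 := by simpa using hz
      rw [hu0, mul_zero] at hunit
      exact one_ne_zero hunit.symm
    set m := (a * n + 1) / b with hm
    have hmb : m * b = a * n + 1 := Nat.div_mul_cancel hdvd
    have hmle : m ≤ a := by
      have h2 : a * n + 1 ≤ a * b := by
        have h3 : n + 1 ≤ b := hnlt
        calc a * n + 1 ≤ a * n + a := by omega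
          _ = a * (n + 1) := by ring
          _ ≤ a * b := Nat.mul_le_mul_left a h3
      calc m ≤ (a*b)/b := Nat.div_le_div_right h2
        _ = a := Nat.mul_div_cancel a (by omega)
    have hmem : ((m, n) : ℕ×ℕ) ∈ Lset ζ := by
      refine ⟨?_, ?_⟩
      · simp only [Prod.mk.injEq, ne_eq, not_and]
        intro h; omega
      · show ((m:ℕ):ℝ) < ((n:ℕ):ℝ) * ζ
        have hb0 : (0:ℝ) < (b:ℝ) := by
          have : 0 < b := by omega
          exact_mod_cast this
        have hcast : (m:ℝ) * (b:ℝ) = (a:ℝ) * (n:ℝ) + 1 := by exact_mod_cast hmb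
        have hn1' : (1:ℝ) ≤ (n:ℝ) := by exact_mod_cast hn1
        have hkey : ((a:ℝ) + 1) * n < ((b:ℝ) * ζ) * n := by
          apply mul_lt_mul_of_pos_right hlt
          linarith
        nlinarith [hcast, hkey, hb0]
    have hfin := hL1.2 (m, n) hmem hmle
    rw [hmb] at hfin
    exact Nat.not_succ_le_self (a * n) hfin
  obtain ⟨hmem, hmin⟩ := hL1
  refine ⟨hmem, ?_⟩
  rintro ⟨m, n⟩ hy hn
  by_cases hma : m ≤ a
  · exact hmin (m,n) hy hma
  · push_neg at hma
    obtain ⟨hyne, hylt⟩ := hy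
    have hn1 : 1 ≤ n := by
      by_contra hcon
      have hn0 : n = 0 := by omega
      subst hn0
      simp only [Nat.cast_zero, zero_mul] at hylt
      have : (0:ℝ) ≤ (m:ℝ) := by positivity
      linarith
    have han : ((a, n) : ℕ×ℕ) ∈ Lset ζ := by
      refine ⟨?_, ?_⟩
      · simp only [Prod.mk.injEq, ne_eq, not_and]
        intro h; omega
      · show ((a:ℕ):ℝ) < ((n:ℕ):ℝ) * ζ
        have : (a:ℝ) < (m:ℝ) := by exact_mod_cast hma
        linarith
    have h2 := hmin (a, n) han (le_refl a)
    have hbn : b ≤ n := Nat.le_of_mul_le_mul_left h2 ha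
    have hnb : n = b := by omega
    subst hnb
    exfalso
    apply key
    have hm1 : (a:ℝ) + 1 ≤ (m:ℝ) := by exact_mod_cast hma
    linarith


def RHSp (ζ : ℝ) (a b : ℕ) : Prop :=
  ∃ n : ℕ, 1 ≤ n ∧ ∃ x : ℕ, 1 ≤ x ∧ x ≤ cfDigit ζ n ∧
    (a, b) = cfp ((List.ofFn fun i : Fin n => cfDigit ζ i.val) ++ [x])

lemma digits_entries {ζ : ℝ} (h1 : 1 < ζ) (hirr : Irrational ζ) (n x : ℕ) (hx : 1 ≤ x) :
    ∀ c ∈ (List.ofFn fun i : Fin n => cfDigit ζ i.val) ++ [x], 1 ≤ c := by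
  intro c hc
  rw [List.mem_append] at hc
  rcases hc with hc | hc
  · rw [List.mem_ofFn] at hc
    obtain ⟨i, rfl⟩ := hc
    exact cfDigit_pos h1 hirr _
  · simp only [List.mem_singleton] at hc
    omega

lemma Dlist_succ (ζ : ℝ) (n : ℕ) :
    (List.ofFn fun i : Fin (n+1) => cfDigit ζ i.val) =
      cfDigit ζ 0 :: (List.ofFn fun i : Fin n => cfDigit (ζ - ⌊ζ⌋₊)⁻¹ i.val) := by
  rw [List.ofFn_succ]
  congr 1
  exact congrArg List.ofFn (funext fun i => by
    show cfDigit ζ (i.succ.val) = _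
    rw [Fin.val_succ, cfDigit_shift])

lemma cfp_snd_pos (c : ℕ) (r : List ℕ) (hent : ∀ d ∈ r, 1 ≤ d) :
    1 ≤ (cfp (c :: r)).2 := by
  show 1 ≤ (cfp r).1
  exact cfp_fst_pos r hent

lemma rhsp_gt {ζ : ℝ} (h1 : 1 < ζ) (hirr : Irrational ζ) {a b : ℕ} (h : RHSp ζ a b) :
    ⌊ζ⌋₊ * b + 1 ≤ a ∧ 1 ≤ b := by
  obtain ⟨n, hn, x, hx1, hxd, heq⟩ := h
  obtain ⟨n', rfl⟩ : ∃ n', n = n' + 1 := ⟨n - 1, by omega⟩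
  rw [Dlist_succ, List.cons_append] at heq
  have hent : ∀ c ∈ (List.ofFn fun i : Fin n' => cfDigit (ζ - ⌊ζ⌋₊)⁻¹ i.val) ++ [x], 1 ≤ c :=
    digits_entries (zeta'_gt h1 hirr) (zeta'_irr hirr) n' x hx1
  have hfst : 1 ≤ (cfp ((List.ofFn fun i : Fin n' => cfDigit (ζ - ⌊ζ⌋₊)⁻¹ i.val) ++ [x])).1 :=
    cfp_fst_pos _ hent
  have hsnd : 1 ≤ (cfp ((List.ofFn fun i : Fin n' => cfDigit (ζ - ⌊ζ⌋₊)⁻¹ i.val) ++ [x])).2 := by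
    rcases hl : (List.ofFn fun i : Fin n' => cfDigit (ζ - ⌊ζ⌋₊)⁻¹ i.val) ++ [x] with _ | ⟨c, r⟩
    · exfalso; simpa using hl
    · apply cfp_snd_pos
      intro d hd
      have : d ∈ (List.ofFn fun i : Fin n' => cfDigit (ζ - ⌊ζ⌋₊)⁻¹ i.val) ++ [x] := by
        rw [hl]; exact List.mem_cons_of_mem c hd
      exact hent d this
  rw [Prod.ext_iff] at heq
  obtain ⟨hA, hB⟩ := heq
  have hA' : a = cfDigit ζ 0 *
      (cfp ((List.ofFn fun i : Fin n' => cfDigit (ζ - ⌊ζ⌋₊)⁻¹ i.val) ++ [x])).1 +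
      (cfp ((List.ofFn fun i : Fin n' => cfDigit (ζ - ⌊ζ⌋₊)⁻¹ i.val) ++ [x])).2 := hA
  have hB' : b = (cfp ((List.ofFn fun i : Fin n' => cfDigit (ζ - ⌊ζ⌋₊)⁻¹ i.val) ++ [x])).1 := hB
  constructor
  · rw [hA', hB', cfDigit_zero]
    exact Nat.add_le_add_left hsnd _
  · rw [hB']; exact hfst

lemma main : ∀ N : ℕ, ∀ a b : ℕ, ∀ ζ : ℝ, a + b ≤ N → 1 < ζ → Irrational ζ →
    Nat.Coprime a b → (a, b) ≠ (1, 0) → (a, b) ≠ (⌊ζ⌋₊, 1) →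
    (BestApprox ζ (a, b) ↔ RHSp ζ a b) := by
  intro N
  induction N with
  | zero =>
    intro a b ζ hN _ _ hcop _ _
    exfalso
    have ha : a = 0 := by omega
    have hb : b = 0 := by omega
    subst ha; subst hb
    simp [Nat.Coprime] at hcop
  | succ N ih =>
    intro a b ζ hN h1 hirr hcop h10 hk1
    rcases Nat.eq_zero_or_pos b with hb0 | hb
    · exfalso
      subst hb0
      have : a = 1 := (Nat.coprime_zero_right a).mp hcop
      exact h10 (by rw [this])
    have hk : 1 ≤ ⌊ζ⌋₊ := one_le_floor' h1
    have hkζ : (⌊ζ⌋₊:ℝ) < ζ := floor_lt' h1 hirr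
    by_cases hmaincase : ⌊ζ⌋₊ * b + 1 ≤ a
    · -- main case
      have h1' : 1 < (ζ - ⌊ζ⌋₊)⁻¹ := zeta'_gt h1 hirr
      have hirr' : Irrational (ζ - ⌊ζ⌋₊)⁻¹ := zeta'_irr hirr
      have hb'1 : 1 ≤ a - ⌊ζ⌋₊ * b := by omega
      have heqa : a = ⌊ζ⌋₊ * b + (a - ⌊ζ⌋₊ * b) := by omega
      have hpair : (a, b) = (⌊ζ⌋₊ * b + (a - ⌊ζ⌋₊ * b), b) := by
        rw [Prod.ext_iff]; exact ⟨heqa, rfl⟩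
      have hcop' : Nat.Coprime b (a - ⌊ζ⌋₊ * b) := by
        have h2 : Nat.Coprime (⌊ζ⌋₊ * b + (a - ⌊ζ⌋₊ * b)) b := by rw [← heqa]; exact hcop
        have h3 : Nat.Coprime ((a - ⌊ζ⌋₊ * b) + ⌊ζ⌋₊ * b) b := by rwa [Nat.add_comm] at h2
        have h4 : Nat.Coprime (a - ⌊ζ⌋₊ * b) b :=
          (Nat.coprime_add_mul_right_left _ _ _).mp h3
        exact h4.symm
      have hsize : b + (a - ⌊ζ⌋₊ * b) ≤ N := by
        have hkb : 1 ≤ ⌊ζ⌋₊ * b := Nat.one_le_iff_ne_zero.mpr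
          (Nat.mul_ne_zero (by omega) (by omega))
        omega
      have hG : ((a,b) : ℕ×ℕ) ∈ Gset := by
        refine ⟨?_, hcop⟩
        simp only [Prod.mk.injEq, ne_eq, not_and]
        intro h; omega
      have hG' : ((b, a - ⌊ζ⌋₊ * b) : ℕ×ℕ) ∈ Gset := by
        refine ⟨?_, hcop'⟩
        simp only [Prod.mk.injEq, ne_eq, not_and]
        intro h; omega
      have step1 : BestApprox ζ (a,b) ↔
          (((b, a - ⌊ζ⌋₊ * b) : ℕ×ℕ) ∈ L1 (ζ - ⌊ζ⌋₊)⁻¹ ∨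
           ((b, a - ⌊ζ⌋₊ * b) : ℕ×ℕ) ∈ U1 (ζ - ⌊ζ⌋₊)⁻¹) := by
        unfold BestApprox
        constructor
        · rintro (⟨_, hU1⟩ | ⟨_, hL2⟩)
          · left
            have hU2 : (a,b) ∈ U2 ζ := (U1_iff_U2 h1 hb).mp hU1
            rw [hpair] at hU2
            exact (UL_corr h1 hirr hb hb'1).mp hU2
          · right
            rw [hpair] at hL2
            exact (LU_corr h1 hirr hb hb'1).mp hL2
        · rintro (hL1 | hU1)
          · left
            refine ⟨hG, ?_⟩
            have hU2 := (UL_corr h1 hirr hb hb'1).mpr hL1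
            rw [← hpair] at hU2
            exact (U1_iff_U2 h1 hb).mpr hU2
          · right
            refine ⟨hG, ?_⟩
            have hL2 := (LU_corr h1 hirr hb hb'1).mpr hU1
            rwa [← hpair] at hL2
      have step2 : (((b, a - ⌊ζ⌋₊ * b) : ℕ×ℕ) ∈ L1 (ζ - ⌊ζ⌋₊)⁻¹ ∨
           ((b, a - ⌊ζ⌋₊ * b) : ℕ×ℕ) ∈ U1 (ζ - ⌊ζ⌋₊)⁻¹) ↔
          ((a - ⌊ζ⌋₊ * b = 1 ∧ b ≤ ⌊(ζ - ⌊ζ⌋₊)⁻¹⌋₊) ∨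
            BestApprox (ζ - ⌊ζ⌋₊)⁻¹ (b, a - ⌊ζ⌋₊ * b)) := by
        constructor
        · rintro (hL1 | hU1)
          · rcases eq_or_lt_of_le hb'1 with hbe | hbg
            · left
              refine ⟨hbe.symm, ?_⟩
              have hmem := hL1.1
              rw [← hbe] at hmem
              exact L_one_le hmem
            · right
              exact Or.inr ⟨hG', lemA h1' hcop' (by omega) hL1⟩
          · exact Or.inr (Or.inl ⟨hG', hU1⟩)
        · rintro (⟨hbe, hle⟩ | hBA)
          · left
            rw [hbe]
            exact L1_one h1' hirr' hb hle
          · rcases hBA with ⟨_, hU1⟩ | ⟨_, hL2⟩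
            · right; exact hU1
            · left; exact L2_sub_L1 hL2
      have step3 : ((a - ⌊ζ⌋₊ * b = 1 ∧ b ≤ ⌊(ζ - ⌊ζ⌋₊)⁻¹⌋₊) ∨
            BestApprox (ζ - ⌊ζ⌋₊)⁻¹ (b, a - ⌊ζ⌋₊ * b)) ↔
          ((a - ⌊ζ⌋₊ * b = 1 ∧ b ≤ ⌊(ζ - ⌊ζ⌋₊)⁻¹⌋₊) ∨
            RHSp (ζ - ⌊ζ⌋₊)⁻¹ b (a - ⌊ζ⌋₊ * b)) := by
        have hne10 : ((b, a - ⌊ζ⌋₊ * b) : ℕ × ℕ) ≠ (1, 0) := by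
          simp only [Prod.mk.injEq, ne_eq, not_and]
          intro h; omega
        constructor
        · rintro (h | h)
          · exact Or.inl h
          · by_cases hex : ((b, a - ⌊ζ⌋₊ * b) : ℕ × ℕ) = (⌊(ζ - ⌊ζ⌋₊)⁻¹⌋₊, 1)
            · left
              rw [Prod.ext_iff] at hex
              exact ⟨hex.2, le_of_eq hex.1⟩
            · right
              exact (ih b (a - ⌊ζ⌋₊ * b) (ζ - ⌊ζ⌋₊)⁻¹ hsize h1' hirr' hcop' hne10 hex).mp h
        · rintro (h | h)
          · exact Or.inl h
          · right
            have hgt := rhsp_gt h1' hirr' h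
            have hex : ((b, a - ⌊ζ⌋₊ * b) : ℕ × ℕ) ≠ (⌊(ζ - ⌊ζ⌋₊)⁻¹⌋₊, 1) := by
              intro hcon
              rw [Prod.mk.injEq] at hcon
              obtain ⟨hc1, hc2⟩ := hcon
              rw [hc2, Nat.mul_one] at hgt
              omega
            exact (ih b (a - ⌊ζ⌋₊ * b) (ζ - ⌊ζ⌋₊)⁻¹ hsize h1' hirr' hcop' hne10 hex).mpr h
      have step4 : ((a - ⌊ζ⌋₊ * b = 1 ∧ b ≤ ⌊(ζ - ⌊ζ⌋₊)⁻¹⌋₊) ∨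
            RHSp (ζ - ⌊ζ⌋₊)⁻¹ b (a - ⌊ζ⌋₊ * b)) ↔ RHSp ζ a b := by
        have hd1 : cfDigit ζ 1 = ⌊(ζ - ⌊ζ⌋₊)⁻¹⌋₊ := by
          rw [show (1:ℕ) = 0 + 1 from rfl, cfDigit_shift, cfDigit_zero]
        constructor
        · rintro (⟨hbe, hle⟩ | h)
          · refine ⟨1, le_refl 1, b, hb, ?_, ?_⟩
            · rw [hd1]; exact hle
            · have hlist : (List.ofFn fun i : Fin 1 => cfDigit ζ i.val) = [cfDigit ζ 0] := by
                simp [List.ofFn_succ]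
              rw [hlist]
              show (a, b) = (cfDigit ζ 0 * (b * 1 + 0) + 1, b * 1 + 0)
              rw [cfDigit_zero]
              rw [Prod.ext_iff]
              constructor
              · show a = ⌊ζ⌋₊ * (b * 1 + 0) + 1
                simp only [Nat.mul_one, Nat.add_zero]
                omega
              · show b = b * 1 + 0
                omega
          · obtain ⟨n', hn', x, hx1, hxd, heq⟩ := h
            refine ⟨n' + 1, by omega, x, hx1, ?_, ?_⟩
            · rw [cfDigit_shift]; exact hxd
            · rw [Dlist_succ, List.cons_append]
              have hc : cfp (cfDigit ζ 0 ::
                  ((List.ofFn fun i : Fin n' => cfDigit (ζ - ⌊ζ⌋₊)⁻¹ i.val) ++ [x]))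
                  = (cfDigit ζ 0 * b + (a - ⌊ζ⌋₊ * b), b) := by
                show (cfDigit ζ 0 * (cfp _).1 + (cfp _).2, (cfp _).1) = _
                rw [← heq]
              rw [hc, cfDigit_zero]
              rw [Prod.ext_iff]
              exact ⟨heqa, rfl⟩
        · rintro ⟨n, hn, x, hx1, hxd, heq⟩
          obtain ⟨n'', rfl⟩ : ∃ m, n = m + 1 := ⟨n - 1, by omega⟩
          rw [Dlist_succ, List.cons_append] at heq
          have heq2 : (a, b) = (cfDigit ζ 0 *
              (cfp ((List.ofFn fun i : Fin n'' => cfDigit (ζ - ⌊ζ⌋₊)⁻¹ i.val) ++ [x])).1 +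
              (cfp ((List.ofFn fun i : Fin n'' => cfDigit (ζ - ⌊ζ⌋₊)⁻¹ i.val) ++ [x])).2,
              (cfp ((List.ofFn fun i : Fin n'' => cfDigit (ζ - ⌊ζ⌋₊)⁻¹ i.val) ++ [x])).1) := heq
          rw [Prod.mk.injEq] at heq2
          obtain ⟨hA, hB⟩ := heq2
          rw [cfDigit_zero] at hA
          have hA2 : a = ⌊ζ⌋₊ * b +
              (cfp ((List.ofFn fun i : Fin n'' => cfDigit (ζ - ⌊ζ⌋₊)⁻¹ i.val) ++ [x])).2 := by
            rw [hA, hB]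
          have hpq : ((b, a - ⌊ζ⌋₊ * b) : ℕ×ℕ) =
              cfp ((List.ofFn fun i : Fin n'' => cfDigit (ζ - ⌊ζ⌋₊)⁻¹ i.val) ++ [x]) := by
            have h5 : a - ⌊ζ⌋₊ * b =
                (cfp ((List.ofFn fun i : Fin n'' => cfDigit (ζ - ⌊ζ⌋₊)⁻¹ i.val) ++ [x])).2 := by
              omega
            exact Prod.ext_iff.mpr ⟨hB, h5⟩
          rcases Nat.eq_zero_or_pos n'' with h0 | hpos
          · subst h0
            left
            have hTx : (List.ofFn fun i : Fin 0 => cfDigit (ζ - ⌊ζ⌋₊)⁻¹ i.val) ++ [x] = [x] := by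
              simp
            rw [hTx] at hpq
            have hx : ((b, a - ⌊ζ⌋₊ * b) : ℕ×ℕ) = (x * 1 + 0, 1) := hpq
            rw [Prod.mk.injEq] at hx
            obtain ⟨hx1', hx2'⟩ := hx
            refine ⟨hx2', ?_⟩
            have hxx : b = x := by omega
            rw [hxx, ← hd1]
            exact hxd
          · right
            refine ⟨n'', hpos, x, hx1, ?_, hpq⟩
            rw [← cfDigit_shift]
            exact hxd
      exact step1.trans (step2.trans (step3.trans step4))
    · -- a ≤ ⌊ζ⌋₊ * b
      have hale : a ≤ ⌊ζ⌋₊ * b := by omega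
      rcases eq_or_lt_of_le hale with haeq | halt
      · exfalso
        have hbdvd : b ∣ a := ⟨⌊ζ⌋₊, by rw [haeq]; ring⟩
        have hbone : b = 1 := (Nat.Coprime.eq_one_of_dvd hcop.symm hbdvd)
        apply hk1
        rw [Prod.ext_iff]
        constructor
        · show a = ⌊ζ⌋₊
          rw [haeq, hbone, Nat.mul_one]
        · exact hbone
      · constructor
        · rintro (⟨_, hU1⟩ | ⟨_, hL2⟩)
          · exfalso
            have hUlt := hU1.1.2
            have hltr : (a:ℝ) < (⌊ζ⌋₊:ℝ) * (b:ℝ) := by exact_mod_cast halt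
            have hbpos : (0:ℝ) < (b:ℝ) := by
              have : 0 < b := hb
              exact_mod_cast this
            nlinarith [hUlt, hkζ]
          · exfalso
            have hkmem : ((⌊ζ⌋₊, 1) : ℕ×ℕ) ∈ Lset ζ := by
              refine ⟨by simp, ?_⟩
              show ((⌊ζ⌋₊:ℕ):ℝ) < ((1:ℕ):ℝ) * ζ
              push_cast
              linarith
            have hbnd := hL2.2 (⌊ζ⌋₊, 1) hkmem hb
            have : ⌊ζ⌋₊ * b ≤ a * 1 := hbnd
            omega
        · intro hR
          exfalso
          have := (rhsp_gt h1 hirr hR).1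
          omega

lemma cfp_snd_pos' (L : List ℕ) (hL : L ≠ []) (hent : ∀ d ∈ L, 1 ≤ d) : 1 ≤ (cfp L).2 := by
  cases L with
  | nil => exact absurd rfl hL
  | cons c r => exact cfp_snd_pos c r (fun d hd => hent d (List.mem_cons_of_mem c hd))

lemma rhs_iff {ζ : ℝ} (h1 : 1 < ζ) (hirr : Irrational ζ) {a b : ℕ}
    (hcop : Nat.Coprime a b) (hb : 1 ≤ b) :
    (∃ n : ℕ, 1 ≤ n ∧ ∃ x : ℕ, 1 ≤ x ∧ x ≤ cfDigit ζ n ∧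
      (a : ℚ) / (b : ℚ) = cfVal ((List.ofFn fun i : Fin n => cfDigit ζ i.val) ++ [x]))
    ↔ RHSp ζ a b := by
  constructor
  · rintro ⟨n, hn, x, hx1, hxd, heq⟩
    refine ⟨n, hn, x, hx1, hxd, ?_⟩
    have hent := digits_entries h1 hirr n x hx1
    have hval := cfp_val _ hent
    have hq : 1 ≤ (cfp ((List.ofFn fun i : Fin n => cfDigit ζ i.val) ++ [x])).2 :=
      cfp_snd_pos' _ (by simp) hent
    have hres := frac_eq_pair hb hq hcop (cfp_coprime _) (by rw [← hval]; exact heq)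
    exact Prod.ext_iff.mpr hres
  · rintro ⟨n, hn, x, hx1, hxd, heq⟩
    refine ⟨n, hn, x, hx1, hxd, ?_⟩
    have hent := digits_entries h1 hirr n x hx1
    have hval := cfp_val _ hent
    have hA : a = (cfp ((List.ofFn fun i : Fin n => cfDigit ζ i.val) ++ [x])).1 :=
      congrArg Prod.fst heq
    have hB : b = (cfp ((List.ofFn fun i : Fin n => cfDigit ζ i.val) ++ [x])).2 :=
      congrArg Prod.snd heq
    rw [hval, hA, hB]

end S18


/-- Theorem `ApproxFrac`: for irrational `ξ > 1` with continued fraction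
expansion `[x₀; x₁, x₂, …]` and `(a,b) ∈ 𝒩 \ {(1,0), (x₀,1)}`, the pair `(a,b)` is an
upper or lower best approximation for `ξ` iff `gcd(a,b) = 1` and
`a/b = [x₀; x₁, …, x_{n-1}, x]` for some `n ≥ 1` and `1 ≤ x ≤ xₙ`. -/
theorem stmt_18 (ξ : ℝ) (hξ : 1 < ξ) (hirr : Irrational ξ) (a b : ℕ)
    (hab : (a, b) ≠ (0, 0)) (h10 : (a, b) ≠ (1, 0)) (hx0 : (a, b) ≠ (cfDigit ξ 0, 1)) :
    BestApprox ξ (a, b) ↔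
      (Nat.Coprime a b ∧ ∃ n : ℕ, 1 ≤ n ∧ ∃ x : ℕ, 1 ≤ x ∧ x ≤ cfDigit ξ n ∧
        (a : ℚ) / (b : ℚ) =
          cfVal ((List.ofFn fun i : Fin n => cfDigit ξ i.val) ++ [x])) := by
  by_cases hcop : Nat.Coprime a b
  · have hb : 1 ≤ b := by
      rcases Nat.eq_zero_or_pos b with h0 | h
      · exfalso
        subst h0
        exact h10 (by rw [(Nat.coprime_zero_right a).mp hcop])
      · exact h
    have hk1 : (a, b) ≠ (⌊ξ⌋₊, 1) := by
      intro h
      exact hx0 (by rw [h, S18.cfDigit_zero])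
    have hmain := S18.main (a + b) a b ξ (le_refl _) hξ hirr hcop h10 hk1
    rw [hmain]
    constructor
    · intro h
      exact ⟨hcop, (S18.rhs_iff hξ hirr hcop hb).mpr h⟩
    · rintro ⟨_, h⟩
      exact (S18.rhs_iff hξ hirr hcop hb).mp h
  · constructor
    · rintro (⟨hG, _⟩ | ⟨hG, _⟩) <;> exact absurd hG.2 hcop
    · rintro ⟨hc, _⟩
      exact absurd hc hcop
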